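/- Let 1 ≤ i ≤ k < j ≤ n and let A = (I_k ⊕ 0_{n−k}) + i(μE_{ij} + μ̄E_{ji}) for μ ∈ ℂ with |μ| = 1/2. Then w_k(A) = k, and w_k(A) is attained at the projection P = I_k ⊕ 0_{n−k}, i.e., tr(AP) = w_k(A). -/

import Mathlib

open Matrix


lemma aux_trace_eq_rank {m : Type*} [Fintype m] [DecidableEq m]
    (Q : Matrix m m ℂ) (hQ : Q * Q = Q) : Q.trace = (Q.rank : ℂ) := by
  have hff : Q.mulVecLin ∘ₗ Q.mulVecLin = Q.mulVecLin := by
    rw [← Matrix.mulVecLin_mul, hQ]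
  have hproj : LinearMap.IsProj (LinearMap.range Q.mulVecLin) Q.mulVecLin := by
    refine ⟨fun x => LinearMap.mem_range_self _ x, ?_⟩
    rintro x ⟨y, rfl⟩
    exact LinearMap.ext_iff.mp hff y
  have h1 := hproj.trace
  have h2 := LinearMap.trace_eq_matrix_trace ℂ (Pi.basisFun ℂ m) Q.mulVecLin
  have h3 : (LinearMap.toMatrix (Pi.basisFun ℂ m) (Pi.basisFun ℂ m)) Q.mulVecLin = Q := by
    rw [LinearMap.toMatrix_eq_toMatrix', ← Matrix.toLin'_apply' Q, LinearMap.toMatrix'_toLin']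
  rw [h3] at h2
  rw [← h2, h1]
  rfl

lemma aux_key (n k : ℕ) (hk : 1 ≤ k) (i j : Fin n) (hi : (i : ℕ) < k) (hj : k ≤ (j : ℕ))
    (μ : ℂ) (hμ : ‖μ‖ = 1 / 2)
    (Q : Matrix (Fin n) (Fin n) ℂ) (hQ : Q * Q = Q) (hH : Qᴴ = Q) (hrk : Q.rank = k) :
    ‖(∑ a ∈ Finset.univ.filter (fun a : Fin n => (a : ℕ) < k), Q a a)
      + Complex.I * (μ * Q j i + (starRingEnd ℂ μ) * Q i j)‖ ≤ (k : ℝ) := by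
  set r : Fin n → ℝ := fun a => ∑ b, Complex.normSq (Q a b) with hr_def
  have hconj : ∀ a b, Q b a = (starRingEnd ℂ) (Q a b) := by
    intro a b
    conv_lhs => rw [← hH]
    rfl
  have hr_nonneg : ∀ a, 0 ≤ r a := fun a =>
    Finset.sum_nonneg fun b _ => Complex.normSq_nonneg _
  have hQaa : ∀ a, Q a a = ((r a : ℝ) : ℂ) := by
    intro a
    conv_lhs => rw [← hQ]
    rw [Matrix.mul_apply, hr_def]
    push_cast
    refine Finset.sum_congr rfl fun b _ => ?_
    rw [hconj a b, Complex.mul_conj]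
  have htr : ∑ a, r a = (k : ℝ) := by
    have h1 : Q.trace = (k : ℂ) := by rw [aux_trace_eq_rank Q hQ, hrk]
    have h2 : Q.trace = ((∑ a, r a : ℝ) : ℂ) := by
      rw [Matrix.trace]
      push_cast
      exact Finset.sum_congr rfl fun a _ => hQaa a
    rw [h2] at h1
    exact_mod_cast h1
  set s : Finset (Fin n) := Finset.univ.filter (fun a : Fin n => (a : ℕ) < k) with hs_def
  set p : ℝ := ∑ a ∈ s, r a with hp_def
  have hp0 : 0 ≤ p := Finset.sum_nonneg fun a _ => hr_nonneg a
  have hpk : p ≤ k := by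
    rw [← htr, hp_def]
    exact Finset.sum_le_sum_of_subset_of_nonneg (Finset.subset_univ s)
      (fun a _ _ => hr_nonneg a)
  have hri : r i ≤ p :=
    Finset.single_le_sum (fun a _ => hr_nonneg a) (by simp [hs_def, hi])
  have hrj : r j ≤ (k : ℝ) - p := by
    have hsplit := Finset.sum_filter_add_sum_filter_not Finset.univ
      (fun a : Fin n => (a : ℕ) < k) r
    rw [← hs_def] at hsplit
    have hjm : j ∈ Finset.univ.filter (fun a : Fin n => ¬ (a : ℕ) < k) := by
      simp [Nat.not_lt]
      exact hj
    have := Finset.single_le_sum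
      (f := r) (fun a _ => hr_nonneg a) hjm
    rw [htr] at hsplit
    linarith
  have hCS : Complex.normSq (Q i j) ≤ r i * r j := by
    have e1 : Q i j = ∑ b, Q i b * Q b j := by
      conv_lhs => rw [← hQ]
      rw [Matrix.mul_apply]
    have e2 : ‖Q i j‖ ≤ ∑ b, ‖Q i b‖ * ‖Q b j‖ := by
      rw [e1]
      refine (norm_sum_le _ _).trans_eq ?_
      exact Finset.sum_congr rfl fun b _ => norm_mul _ _
    have e3 : (∑ b, ‖Q i b‖ * ‖Q b j‖) ^ 2
        ≤ (∑ b, ‖Q i b‖ ^ 2) * (∑ b, ‖Q b j‖ ^ 2) :=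
      Finset.sum_mul_sq_le_sq_mul_sq _ _ _
    have e4 : (∑ b, ‖Q i b‖ ^ 2) = r i := by
      rw [hr_def]
      exact Finset.sum_congr rfl fun b _ => Complex.sq_norm _
    have e5 : (∑ b, ‖Q b j‖ ^ 2) = r j := by
      rw [hr_def]
      refine Finset.sum_congr rfl fun b _ => ?_
      rw [hconj j b, Complex.norm_conj, Complex.sq_norm]
    have e6 : Complex.normSq (Q i j) = ‖Q i j‖ ^ 2 := (Complex.sq_norm _).symm
    have e7 : ‖Q i j‖ ^ 2 ≤ (∑ b, ‖Q i b‖ * ‖Q b j‖) ^ 2 :=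
      pow_le_pow_left₀ (norm_nonneg _) e2 2
    rw [e6]
    calc ‖Q i j‖ ^ 2 ≤ _ := e7
      _ ≤ _ := e3
      _ = r i * r j := by rw [e4, e5]
  set t : ℂ := μ * Q j i + (starRingEnd ℂ) μ * Q i j with ht_def
  have htreal : t = ((t.re : ℝ) : ℂ) := by
    rw [eq_comm, ← Complex.conj_eq_iff_re, ht_def]
    rw [map_add, _root_.map_mul, _root_.map_mul, ← hconj i j, ← hconj j i,
      Complex.conj_conj]
    ring
  have htabs : ‖t‖ ≤ ‖Q i j‖ := by
    have h1 : ‖t‖ ≤ ‖μ * Q j i‖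
        + ‖(starRingEnd ℂ) μ * Q i j‖ := norm_add_le _ _
    have h2 : ‖Q j i‖ = ‖Q i j‖ := by
      rw [hconj i j, Complex.norm_conj]
    rw [norm_mul, norm_mul, Complex.norm_conj, hμ, h2] at h1
    linarith
  have hsum : (∑ a ∈ s, Q a a) = ((p : ℝ) : ℂ) := by
    rw [hp_def]
    push_cast
    exact Finset.sum_congr rfl fun a _ => hQaa a
  rw [hsum]
  have habs2 : ‖((p : ℝ) : ℂ) + Complex.I * t‖ ^ 2 = p ^ 2 + t.re ^ 2 := by
    rw [Complex.sq_norm, Complex.normSq_apply]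
    rw [htreal]
    simp
    ring
  have htre2 : t.re ^ 2 ≤ p * ((k : ℝ) - p) := by
    have h1 : ‖t‖ = |t.re| := by
      nth_rewrite 1 [htreal]
      rw [Complex.norm_real, Real.norm_eq_abs]
    have h2 : t.re ^ 2 = ‖t‖ ^ 2 := by rw [h1, sq_abs]
    have h3 : ‖t‖ ^ 2 ≤ ‖Q i j‖ ^ 2 :=
      pow_le_pow_left₀ (norm_nonneg _) htabs 2
    have h4 : ‖Q i j‖ ^ 2 = Complex.normSq (Q i j) := Complex.sq_norm _
    have h5 : r i * r j ≤ p * ((k : ℝ) - p) :=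
      mul_le_mul hri hrj (hr_nonneg j) hp0
    linarith
  have hk1 : (1 : ℝ) ≤ (k : ℝ) := by exact_mod_cast hk
  nlinarith [norm_nonneg (((p : ℝ) : ℂ) + Complex.I * t), habs2, htre2, hp0, hpk]


lemma aux_card (n k : ℕ) (hkn : k ≤ n) :
    (Finset.univ.filter (fun a : Fin n => (a : ℕ) < k)).card = k := by
  have e : {a : Fin n // (a : ℕ) < k} ≃ Fin k :=
    { toFun := fun a => ⟨a.1, a.2⟩
      invFun := fun b => ⟨⟨b.1, lt_of_lt_of_le b.2 hkn⟩, b.2⟩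
      left_inv := fun a => by ext; rfl
      right_inv := fun b => rfl }
  rw [← Fintype.card_subtype, Fintype.card_congr e, Fintype.card_fin]

lemma aux_P (n k : ℕ) (hkn : k ≤ n) (P : Matrix (Fin n) (Fin n) ℂ)
    (hPdef : P = Matrix.of (fun a b : Fin n => if a = b ∧ (a : ℕ) < k then (1 : ℂ) else 0)) :
    P * P = P ∧ Pᴴ = P ∧ P.rank = k := by
  have hPd : P = Matrix.diagonal (fun a : Fin n => if (a : ℕ) < k then (1 : ℂ) else 0) := by
    rw [hPdef]
    ext a b
    by_cases h : a = b
    · subst h; simp [Matrix.diagonal]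
    · simp [Matrix.diagonal, h]
  refine ⟨?_, ?_, ?_⟩
  · rw [hPd, Matrix.diagonal_mul_diagonal]
    apply congrArg Matrix.diagonal
    funext a
    by_cases h : (a : ℕ) < k <;> simp [h]
  · rw [hPd, Matrix.diagonal_conjTranspose]
    apply congrArg Matrix.diagonal
    funext a
    by_cases h : (a : ℕ) < k <;> simp [Pi.star_apply, h]
  · rw [hPd, Matrix.rank_diagonal]
    have h1 : Fintype.card {a : Fin n // (if (a : ℕ) < k then (1 : ℂ) else 0) ≠ 0}
        = Fintype.card {a : Fin n // (a : ℕ) < k} := by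
      apply Fintype.card_congr
      apply Equiv.subtypeEquivRight
      intro a
      by_cases h : (a : ℕ) < k <;> simp [h]
    rw [h1, Fintype.card_subtype, aux_card n k hkn]


lemma aux_trace_std (n : ℕ) (i j : Fin n) (Q : Matrix (Fin n) (Fin n) ℂ) :
    (Matrix.single i j (1 : ℂ) * Q).trace = Q j i := by
  simp [Matrix.trace, Matrix.diag, Matrix.mul_apply, Matrix.single, ite_and,
    Finset.sum_ite_eq, Finset.sum_ite_eq']

lemma aux_trace_P (n k : ℕ) (P : Matrix (Fin n) (Fin n) ℂ)
    (hPdef : P = Matrix.of (fun a b : Fin n => if a = b ∧ (a : ℕ) < k then (1 : ℂ) else 0))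
    (Q : Matrix (Fin n) (Fin n) ℂ) :
    (P * Q).trace = ∑ a ∈ Finset.univ.filter (fun a : Fin n => (a : ℕ) < k), Q a a := by
  rw [hPdef, Finset.sum_filter]
  simp [Matrix.trace, Matrix.diag, Matrix.mul_apply, ite_and, Finset.sum_ite_eq,
    Finset.sum_ite_eq']


/-- `P` is an orthogonal projection of rank `k`. -/
def IsProjOfRank {m : Type*} [Fintype m] [DecidableEq m]
    (P : Matrix m m ℂ) (k : ℕ) : Prop :=
  P * P = P ∧ Pᴴ = P ∧ P.rank = k

/-- The `k`-numerical range `W_k(A) = { tr (A P) : P an orthogonal projection of rank k }`. -/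
def WK {m : Type*} [Fintype m] [DecidableEq m] (k : ℕ) (A : Matrix m m ℂ) : Set ℂ :=
  {z | ∃ P : Matrix m m ℂ, IsProjOfRank P k ∧ z = (A * P).trace}

/-- The `k`-numerical radius `w_k(A) = max { |tr (A P)| : P a rank-k orthogonal projection }`. -/
noncomputable def wk {m : Type*} [Fintype m] [DecidableEq m] (k : ℕ) (A : Matrix m m ℂ) : ℝ :=
  sSup {r : ℝ | ∃ P : Matrix m m ℂ, IsProjOfRank P k ∧ r = ‖(A * P).trace‖}

/-- `A` and `B` are parallel with respect to the `k`-numerical radius. -/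
noncomputable def ParallelWk {m : Type*} [Fintype m] [DecidableEq m]
    (k : ℕ) (A B : Matrix m m ℂ) : Prop :=
  ∃ μ : ℂ, ‖μ‖ = 1 ∧ wk k (A + μ • B) = wk k A + wk k B

/-- Sum of the `k` largest eigenvalues of a Hermitian matrix (`0` if not Hermitian). -/
noncomputable def sumKLargest {m : Type*} [Fintype m] [DecidableEq m]
    (k : ℕ) (A : Matrix m m ℂ) : ℝ :=
  if h : A.IsHermitian then
    sSup {r : ℝ | ∃ s : Finset m, s.card = k ∧ r = ∑ i ∈ s, h.eigenvalues i}
  else 0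

/-- Sum of the `k` smallest eigenvalues of a Hermitian matrix (`0` if not Hermitian). -/
noncomputable def sumKSmallest {m : Type*} [Fintype m] [DecidableEq m]
    (k : ℕ) (A : Matrix m m ℂ) : ℝ :=
  if h : A.IsHermitian then
    sInf {r : ℝ | ∃ s : Finset m, s.card = k ∧ r = ∑ i ∈ s, h.eigenvalues i}
  else 0

/-- for `A = (I_k ⊕ 0) + i(μ E_{ij} + conj μ E_{ji})` with `|μ| = 1/2`,
`i` in the top block and `j` in the bottom block, we have `w_k(A) = k`, attained at
`P = I_k ⊕ 0`. -/
theorem stmt_9 (n k : ℕ) (hk : 1 ≤ k) (hkn : k < n)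
    (i j : Fin n) (hi : (i : ℕ) < k) (hj : k ≤ (j : ℕ))
    (μ : ℂ) (hμ : ‖μ‖ = 1 / 2)
    (P : Matrix (Fin n) (Fin n) ℂ)
    (hPdef : P = Matrix.of (fun a b : Fin n => if a = b ∧ (a : ℕ) < k then (1 : ℂ) else 0))
    (A : Matrix (Fin n) (Fin n) ℂ)
    (hAdef : A = P + Complex.I •
        (μ • Matrix.single i j (1 : ℂ)
          + (starRingEnd ℂ μ) • Matrix.single j i (1 : ℂ))) :
    wk k A = k ∧ (A * P).trace = (k : ℂ) := by
  have hkn' : k ≤ n := hkn.le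
  obtain ⟨hPP, hPH, hPrk⟩ := aux_P n k hkn' P hPdef
  have htrace : ∀ Q : Matrix (Fin n) (Fin n) ℂ, (A * Q).trace =
      (∑ a ∈ Finset.univ.filter (fun a : Fin n => (a : ℕ) < k), Q a a)
      + Complex.I * (μ * Q j i + (starRingEnd ℂ μ) * Q i j) := by
    intro Q
    rw [hAdef, Matrix.add_mul, Matrix.smul_mul, Matrix.add_mul, Matrix.smul_mul,
      Matrix.smul_mul, Matrix.trace_add, Matrix.trace_smul, Matrix.trace_add,
      Matrix.trace_smul, Matrix.trace_smul, aux_trace_P n k P hPdef Q,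
      aux_trace_std n i j Q, aux_trace_std n j i Q]
    simp only [smul_eq_mul]
  have hPji : P j i = 0 := by
    rw [hPdef]
    have : ¬ ((j : ℕ) < k) := Nat.not_lt.mpr hj
    simp [Matrix.of_apply, this]
  have hPij : P i j = 0 := by
    rw [hPdef]
    have : i ≠ j := by
      intro h
      rw [h] at hi
      exact absurd hi (Nat.not_lt.mpr hj)
    simp [Matrix.of_apply, this]
  have htrP : (A * P).trace = (k : ℂ) := by
    rw [htrace P, hPji, hPij]
    have hsum : (∑ a ∈ Finset.univ.filter (fun a : Fin n => (a : ℕ) < k), P a a)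
        = (k : ℂ) := by
      have h1 : ∀ a ∈ Finset.univ.filter (fun a : Fin n => (a : ℕ) < k),
          P a a = 1 := by
        intro a ha
        rw [Finset.mem_filter] at ha
        rw [hPdef]
        simp [Matrix.of_apply, ha.2]
      rw [Finset.sum_congr rfl h1, Finset.sum_const, aux_card n k hkn']
      simp
    rw [hsum]
    simp
  refine ⟨?_, htrP⟩
  have hub : ∀ x ∈ {r : ℝ | ∃ Q : Matrix (Fin n) (Fin n) ℂ,
      IsProjOfRank Q k ∧ r = ‖(A * Q).trace‖}, x ≤ (k : ℝ) := by
    rintro x ⟨Q, ⟨h1, h2, h3⟩, rfl⟩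
    rw [htrace Q]
    exact aux_key n k hk i j hi hj μ hμ Q h1 h2 h3
  have hmem : (k : ℝ) ∈ {r : ℝ | ∃ Q : Matrix (Fin n) (Fin n) ℂ,
      IsProjOfRank Q k ∧ r = ‖(A * Q).trace‖} := by
    refine ⟨P, ⟨hPP, hPH, hPrk⟩, ?_⟩
    rw [htrP]
    simp
  apply le_antisymm
  · exact Real.sSup_le hub (Nat.cast_nonneg k)
  · exact le_csSup ⟨(k : ℝ), hub⟩ hmem
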